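/- Let 0 < γ < β ≤ n and let f : ℝ^n → [0,∞]. Then ∫ f dH^β_∞ ≤ ω_β (1/ω_γ)^(β/γ) (β/γ) (∫ f^(γ/β) dH^γ_∞)^(β/γ), where the integrals are Choquet integrals with respect to the Hausdorff contents. -/

import Mathlib

open scoped ENNReal
open Metric Set MeasureTheory

noncomputable section

/-- `ℝⁿ` as Euclidean space. -/
abbrev Rn (n : ℕ) := EuclideanSpace ℝ (Fin n)

/-- The Choquet integral of a nonnegative function `g` with respect to a
(monotone) set function `C`: `∫ g dC := ∫_0^∞ C({g > t}) dt`. -/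
noncomputable def choquet {X : Type*} (C : Set X → ℝ≥0∞) (g : X → ℝ≥0∞) : ℝ≥0∞ :=
  ∫⁻ t in Ioi (0 : ℝ), C {x | ENNReal.ofReal t < g x}

/-- The Choquet integral of `g` restricted to a set `A`. -/
noncomputable def choquetOn {X : Type*} (C : Set X → ℝ≥0∞) (A : Set X) (g : X → ℝ≥0∞) : ℝ≥0∞ :=
  ∫⁻ t in Ioi (0 : ℝ), C {x | x ∈ A ∧ ENNReal.ofReal t < g x}

/-- The `L^∞(C)` norm: `inf {λ > 0 : C({|f| > λ}) = 0}` (formulated in `ℝ≥0∞`). -/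
noncomputable def choquetEssSup {X : Type*} (C : Set X → ℝ≥0∞) (f : X → ℝ) : ℝ≥0∞ :=
  sInf {l : ℝ≥0∞ | C {x | l < ENNReal.ofReal |f x|} = 0}

/-- `C`-quasicontinuity of a function `f`. -/
def QuasiCont {X : Type*} [TopologicalSpace X] (C : Set X → ℝ≥0∞) (f : X → ℝ) : Prop :=
  ∀ ε : ℝ≥0∞, 0 < ε → ∃ U : Set X, IsOpen U ∧ C U < ε ∧ ContinuousOn f Uᶜ

/-- Membership in the capacitary space `L^p(C)`: `C`-quasicontinuous with
finite `p`-th power Choquet integral. -/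
def MemChoquetLp {X : Type*} [TopologicalSpace X] (C : Set X → ℝ≥0∞) (p : ℝ) (f : X → ℝ) : Prop :=
  QuasiCont C f ∧ choquet C (fun x => ENNReal.ofReal |f x| ^ p) < ∞

/-- The normalization constant `ω_β = π^{β/2}/Γ(β/2+1)`. -/
noncomputable def omegaC (β : ℝ) : ℝ≥0∞ :=
  ENNReal.ofReal (Real.pi ^ (β / 2) / Real.Gamma (β / 2 + 1))

/-- The `β`-dimensional Hausdorff content `H^β_∞`, defined via countable
coverings by balls: `inf {∑ ω_β r_i^β : E ⊆ ⋃ B(x_i, r_i)}`. -/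
noncomputable def hContent (n : ℕ) (β : ℝ) (E : Set (Rn n)) : ℝ≥0∞ :=
  ⨅ (c : ℕ → Rn n × ℝ) (_ : E ⊆ ⋃ i, ball (c i).1 (c i).2),
    ∑' i, omegaC β * ENNReal.ofReal ((c i).2 ^ β)

/-- The centered Hausdorff content maximal function
`M_{H^β_∞} g(x) := sup_{r>0} (1/(ω_β r^β)) ∫_{B(x,r)} g dH^β_∞`. -/
noncomputable def maximalH (n : ℕ) (β : ℝ) (g : Rn n → ℝ≥0∞) (x : Rn n) : ℝ≥0∞ :=
  ⨆ (r : ℝ) (_ : 0 < r),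
    (omegaC β * ENNReal.ofReal (r ^ β))⁻¹ * choquetOn (hContent n β) (ball x r) g
lemma omegaC_pos {β : ℝ} (hβ : 0 < β) : 0 < omegaC β := by
  apply ENNReal.ofReal_pos.2
  apply div_pos (Real.rpow_pos_of_pos Real.pi_pos _)
  exact Real.Gamma_pos_of_pos (by linarith)
lemma omegaC_ne_top (β : ℝ) : omegaC β ≠ ∞ := ENNReal.ofReal_ne_top
lemma tsum_rpow_le (a : ℕ → ℝ≥0∞) {p : ℝ} (hp : 1 ≤ p) :
    ∑' i, a i ^ p ≤ (∑' i, a i) ^ p := by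
  have h1 : ∀ i, a i ^ p ≤ (∑' i, a i) ^ (p - 1) * a i := by
    intro i
    have : a i ^ p = a i ^ (p - 1) * a i := by
      rw [show p = (p-1)+1 by ring, ENNReal.rpow_add_of_nonneg _ _ (by linarith) zero_le_one]
      ring_nf
      rw [ENNReal.rpow_one]
    rw [this]
    exact mul_le_mul_left (ENNReal.rpow_le_rpow (ENNReal.le_tsum i) (by linarith)) _
  calc ∑' i, a i ^ p ≤ ∑' i, (∑' i, a i) ^ (p - 1) * a i := ENNReal.tsum_le_tsum h1
    _ = (∑' i, a i) ^ (p - 1) * ∑' i, a i := ENNReal.tsum_mul_left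
    _ = (∑' i, a i) ^ p := by
        rw [show p = (p-1)+1 by ring, ENNReal.rpow_add_of_nonneg _ _ (by linarith) zero_le_one,
          ENNReal.rpow_one]
        ring_nf
lemma hContent_mono (n : ℕ) (β : ℝ) {E F : Set (Rn n)} (h : E ⊆ F) :
    hContent n β E ≤ hContent n β F :=
  le_iInf₂ fun c hc => iInf₂_le c (h.trans hc)
lemma aux_iff {K x y : ℝ≥0∞} (hK0 : K ≠ 0) (hKt : K ≠ ∞) {p : ℝ} (hp : 0 < p) :
    x ≤ K * y ^ p ↔ (K⁻¹ * x) ^ (1/p) ≤ y := by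
  constructor
  · intro h
    have h2 : K⁻¹ * x ≤ y ^ p := (ENNReal.inv_mul_le_iff hK0 hKt).2 h
    calc (K⁻¹*x)^(1/p) ≤ (y^p)^(1/p) := ENNReal.rpow_le_rpow h2 (by positivity)
      _ = y := by rw [← ENNReal.rpow_mul, mul_one_div_cancel hp.ne', ENNReal.rpow_one]
  · intro h
    rw [← ENNReal.inv_mul_le_iff hK0 hKt]
    calc K⁻¹*x = ((K⁻¹*x)^(1/p))^p := by
          rw [← ENNReal.rpow_mul, one_div_mul_cancel hp.ne', ENNReal.rpow_one]
      _ ≤ y ^ p := ENNReal.rpow_le_rpow h hp.le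
lemma hContent_compare (n : ℕ) {γ β : ℝ} (hγ : 0 < γ) (hγβ : γ < β) (E : Set (Rn n)) :
    hContent n β E ≤ omegaC β * (omegaC γ)⁻¹ ^ (β / γ) * hContent n γ E ^ (β / γ) := by
  have hβ : 0 < β := hγ.trans hγβ
  set p := β / γ with hpdef
  have hp1 : 1 < p := (one_lt_div hγ).2 hγβ
  have hp0 : 0 < p := zero_lt_one.trans hp1
  have hωβ0 : omegaC β ≠ 0 := (omegaC_pos hβ).ne'
  have hωγ0 : omegaC γ ≠ 0 := (omegaC_pos hγ).ne'
  set K := omegaC β * (omegaC γ)⁻¹ ^ p with hKdef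
  have hK0 : K ≠ 0 := by
    apply mul_ne_zero hωβ0
    exact (ENNReal.rpow_pos (ENNReal.inv_pos.2 (omegaC_ne_top γ)) (ENNReal.inv_ne_top.2 hωγ0)).ne'
  have hKt : K ≠ ∞ := by
    apply ENNReal.mul_ne_top (omegaC_ne_top β)
    exact ENNReal.rpow_ne_top_of_nonneg hp0.le (ENNReal.inv_ne_top.2 hωγ0)
  rw [aux_iff hK0 hKt hp0]
  refine le_iInf₂ fun c hc => ?_
  rw [← aux_iff hK0 hKt hp0]
  -- normalized cover
  set c' : ℕ → Rn n × ℝ := fun i => ((c i).1, max (c i).2 0) with hc'def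
  have hball : ∀ i, ball (c' i).1 (c' i).2 = ball (c i).1 (c i).2 := by
    intro i
    rcases le_or_gt (c i).2 0 with h | h
    · simp [hc'def, max_eq_right h, ball_eq_empty.2 h, ball_eq_empty.2 le_rfl]
    · simp [hc'def, max_eq_left h.le]
  have hc' : E ⊆ ⋃ i, ball (c' i).1 (c' i).2 := by
    simpa only [hball] using hc
  set a : ℕ → ℝ≥0∞ := fun i => ENNReal.ofReal ((c' i).2 ^ γ) with hadef
  have hrβ : ∀ i, ENNReal.ofReal ((c' i).2 ^ β) = a i ^ p := by
    intro i
    have hr0 : 0 ≤ (c' i).2 := le_max_right _ _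
    have hexp : (c' i).2 ^ β = ((c' i).2 ^ γ) ^ p := by
      rw [← Real.rpow_mul hr0]
      congr 1
      rw [hpdef]; field_simp
    show ENNReal.ofReal ((c' i).2 ^ β) = ENNReal.ofReal ((c' i).2 ^ γ) ^ p
    rw [hexp, ← ENNReal.ofReal_rpow_of_nonneg (Real.rpow_nonneg hr0 γ) hp0.le]
  calc hContent n β E ≤ ∑' i, omegaC β * ENNReal.ofReal ((c' i).2 ^ β) := iInf₂_le c' hc'
    _ = omegaC β * ∑' i, a i ^ p := by
        rw [ENNReal.tsum_mul_left]
        congr 1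
        exact tsum_congr hrβ
    _ ≤ omegaC β * (∑' i, a i) ^ p :=
        mul_le_mul_right (tsum_rpow_le a hp1.le) _
    _ ≤ omegaC β * ((omegaC γ)⁻¹ * ∑' i, omegaC γ * ENNReal.ofReal ((c i).2 ^ γ)) ^ p := by
        refine mul_le_mul_right (ENNReal.rpow_le_rpow ?_ hp0.le) _
        rw [← ENNReal.inv_mul_le_iff (ENNReal.inv_ne_zero.2 (omegaC_ne_top γ))
          (ENNReal.inv_ne_top.2 hωγ0), inv_inv, ← ENNReal.tsum_mul_left]
        refine ENNReal.tsum_le_tsum fun i => mul_le_mul_right ?_ _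
        show ENNReal.ofReal ((c' i).2 ^ γ) ≤ ENNReal.ofReal ((c i).2 ^ γ)
        rcases le_or_gt (c i).2 0 with h | h
        · have : (c' i).2 = 0 := max_eq_right h
          rw [this, Real.zero_rpow hγ.ne']
          simp
        · rw [show (c' i).2 = (c i).2 from max_eq_left h.le]
    _ = K * (∑' i, omegaC γ * ENNReal.ofReal ((c i).2 ^ γ)) ^ p := by
        rw [ENNReal.mul_rpow_of_nonneg _ _ hp0.le, hKdef, mul_assoc]
lemma antitone_bound {φ : ℝ → ℝ≥0∞} (hφ : Antitone φ) {s : ℝ} (hs : 0 < s) :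
    φ s * ENNReal.ofReal s ≤ ∫⁻ t in Ioi (0:ℝ), φ t := by
  calc φ s * ENNReal.ofReal s = ∫⁻ _ in Ioc (0:ℝ) s, φ s := by
        rw [setLIntegral_const, Real.volume_Ioc, sub_zero]
    _ ≤ ∫⁻ t in Ioc (0:ℝ) s, φ t :=
        setLIntegral_mono' measurableSet_Ioc fun t ht => hφ ht.2
    _ ≤ ∫⁻ t in Ioi (0:ℝ), φ t := lintegral_mono_set Ioc_subset_Ioi_self
lemma rpow_image_Ioi {p : ℝ} (hp : 0 < p) : (fun s : ℝ => s ^ p) '' Ioi 0 = Ioi 0 := by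
  ext t
  constructor
  · rintro ⟨s, hs, rfl⟩
    exact Real.rpow_pos_of_pos hs p
  · intro ht
    exact ⟨t ^ (1/p), Real.rpow_pos_of_pos ht _, by
      show (t ^ (1/p)) ^ p = t
      rw [← Real.rpow_mul (le_of_lt ht), one_div_mul_cancel hp.ne', Real.rpow_one]⟩
lemma subst_lemma {p : ℝ} (hp : 0 < p) (G : ℝ → ℝ≥0∞) :
    ∫⁻ t in Ioi (0:ℝ), G t
      = ∫⁻ s in Ioi (0:ℝ), ENNReal.ofReal |p * s ^ (p-1)| * G (s ^ p) := by
  have hderiv : ∀ x ∈ Ioi (0:ℝ), HasDerivWithinAt (fun s : ℝ => s ^ p)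
      (p * x ^ (p-1)) (Ioi 0) x := fun x hx =>
    (Real.hasDerivAt_rpow_const (Or.inl (ne_of_gt hx))).hasDerivWithinAt
  have hinj : InjOn (fun s : ℝ => s ^ p) (Ioi 0) := by
    intro a ha b hb hab
    by_contra hne
    rcases lt_or_gt_of_ne hne with h | h
    · exact absurd hab (ne_of_lt (Real.rpow_lt_rpow (le_of_lt ha) h hp))
    · exact absurd hab.symm (ne_of_lt (Real.rpow_lt_rpow (le_of_lt hb) h hp))
  have := lintegral_image_eq_lintegral_abs_det_fderiv_mul volume measurableSet_Ioi
    (f' := fun x => ContinuousLinearMap.smulRight (1 : ℝ →L[ℝ] ℝ) (p * x ^ (p-1)))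
    (fun x hx => (hderiv x hx).hasFDerivWithinAt) hinj G
  rw [rpow_image_Ioi hp] at this
  simpa only [ContinuousLinearMap.smulRight_one_eq_toSpanSingleton, ContinuousLinearMap.det_toSpanSingleton] using this

/-- For `0 < γ < β ≤ n` and `f : ℝ^n → [0,∞]`,
`∫ f dH^β_∞ ≤ ω_β (1/ω_γ)^{β/γ} (β/γ) (∫ f^{γ/β} dH^γ_∞)^{β/γ}`. -/
theorem statement2 (n : ℕ) (γ β : ℝ) (hγ : 0 < γ) (hγβ : γ < β) (hβn : β ≤ n)
    (f : Rn n → ℝ≥0∞) :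
    choquet (hContent n β) f ≤
      omegaC β * ((omegaC γ)⁻¹) ^ (β / γ) * ENNReal.ofReal (β / γ) *
        (choquet (hContent n γ) (fun x => f x ^ (γ / β))) ^ (β / γ) := by
  have hβ : 0 < β := hγ.trans hγβ
  set p := β / γ with hpdef
  have hp1 : 1 < p := (one_lt_div hγ).2 hγβ
  have hp0 : 0 < p := zero_lt_one.trans hp1
  have hq0 : 0 < γ / β := div_pos hγ hβ
  have hωβ0 : omegaC β ≠ 0 := (omegaC_pos hβ).ne'
  have hωγ0 : omegaC γ ≠ 0 := (omegaC_pos hγ).ne'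
  set K := omegaC β * (omegaC γ)⁻¹ ^ p with hKdef
  have hK0 : K ≠ 0 := by
    apply mul_ne_zero hωβ0
    exact (ENNReal.rpow_pos (ENNReal.inv_pos.2 (omegaC_ne_top γ)) (ENNReal.inv_ne_top.2 hωγ0)).ne'
  have hKt : K ≠ ∞ := by
    apply ENNReal.mul_ne_top (omegaC_ne_top β)
    exact ENNReal.rpow_ne_top_of_nonneg hp0.le (ENNReal.inv_ne_top.2 hωγ0)
  set A := choquet (hContent n γ) (fun x => f x ^ (γ / β)) with hAdef
  by_cases hAtop : A = ∞
  · rw [hAtop, ENNReal.top_rpow_of_pos hp0, ENNReal.mul_top]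
    · exact le_top
    · exact mul_ne_zero (mul_ne_zero hωβ0 (ENNReal.rpow_pos
        (ENNReal.inv_pos.2 (omegaC_ne_top γ)) (ENNReal.inv_ne_top.2 hωγ0)).ne')
        (ENNReal.ofReal_pos.2 hp0).ne'
  set φ : ℝ → ℝ≥0∞ := fun s => hContent n γ {x | ENNReal.ofReal s < f x ^ (γ / β)} with hφdef
  have hφ : Antitone φ := fun s s' hss' =>
    hContent_mono n γ fun x hx => lt_of_le_of_lt (ENNReal.ofReal_le_ofReal hss') hx
  have hAφ : A = ∫⁻ t in Ioi (0:ℝ), φ t := rfl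
  have key1 : ∀ t ∈ Ioi (0:ℝ),
      hContent n β {x | ENNReal.ofReal t < f x} ≤ K * φ (t ^ (γ / β)) ^ p := by
    intro t ht
    have hset : {x | ENNReal.ofReal t < f x}
        = {x | ENNReal.ofReal (t ^ (γ / β)) < f x ^ (γ / β)} := by
      ext x
      rw [mem_setOf_eq, mem_setOf_eq, ← ENNReal.ofReal_rpow_of_pos ht]
      exact (ENNReal.rpow_lt_rpow_iff hq0).symm
    rw [hset]
    exact hContent_compare n hγ hγβ _
  have key2 : ∀ s ∈ Ioi (0:ℝ),
      ENNReal.ofReal |p * s ^ (p-1)| * φ ((s ^ p) ^ (γ / β)) ^ p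
        ≤ ENNReal.ofReal p * A ^ (p-1) * φ s := by
    intro s hs
    have hss : (s ^ p) ^ (γ / β) = s := by
      rw [← Real.rpow_mul hs.le, show p * (γ / β) = 1 by
        rw [hpdef]; field_simp, Real.rpow_one]
    rw [hss]
    have habs : |p * s ^ (p-1)| = p * s ^ (p-1) :=
      abs_of_nonneg (mul_nonneg hp0.le (Real.rpow_nonneg hs.le _))
    have hφp : φ s ^ p = φ s ^ (p-1) * φ s := by
      rw [show p = (p-1)+1 by ring, ENNReal.rpow_add_of_nonneg _ _ (by linarith) zero_le_one]
      ring_nf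
      rw [ENNReal.rpow_one]
    have hbound : φ s * ENNReal.ofReal s ≤ A := hAφ ▸ antitone_bound hφ hs
    rw [habs, hφp, ENNReal.ofReal_mul hp0.le, ← ENNReal.ofReal_rpow_of_pos hs]
    calc ENNReal.ofReal p * ENNReal.ofReal s ^ (p-1) * (φ s ^ (p-1) * φ s)
        = ENNReal.ofReal p * (φ s * ENNReal.ofReal s) ^ (p-1) * φ s := by
          rw [ENNReal.mul_rpow_of_nonneg _ _ (by linarith : (0:ℝ) ≤ p - 1)]
          ring
      _ ≤ ENNReal.ofReal p * A ^ (p-1) * φ s :=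
          mul_le_mul' (mul_le_mul_right
            (ENNReal.rpow_le_rpow hbound (by linarith)) _) le_rfl
  have hconst_ne_top : ENNReal.ofReal p * A ^ (p-1) ≠ ∞ :=
    ENNReal.mul_ne_top ENNReal.ofReal_ne_top
      (ENNReal.rpow_ne_top_of_nonneg (by linarith) hAtop)
  calc choquet (hContent n β) f
      ≤ ∫⁻ t in Ioi (0:ℝ), K * φ (t ^ (γ / β)) ^ p :=
        setLIntegral_mono' measurableSet_Ioi key1
    _ = K * ∫⁻ t in Ioi (0:ℝ), φ (t ^ (γ / β)) ^ p := lintegral_const_mul' _ _ hKt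
    _ = K * ∫⁻ s in Ioi (0:ℝ), ENNReal.ofReal |p * s ^ (p-1)| * φ ((s ^ p) ^ (γ / β)) ^ p := by
        rw [subst_lemma hp0 (fun t => φ (t ^ (γ / β)) ^ p)]
    _ ≤ K * ∫⁻ s in Ioi (0:ℝ), ENNReal.ofReal p * A ^ (p-1) * φ s :=
        mul_le_mul_right (setLIntegral_mono' measurableSet_Ioi key2) _
    _ = K * (ENNReal.ofReal p * A ^ (p-1) * ∫⁻ s in Ioi (0:ℝ), φ s) := by
        rw [lintegral_const_mul' _ _ hconst_ne_top]
    _ = K * (ENNReal.ofReal p * (A ^ (p-1) * A)) := by rw [← hAφ]; ring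
    _ = omegaC β * (omegaC γ)⁻¹ ^ p * ENNReal.ofReal p * A ^ p := by
        rw [show A ^ (p-1) * A = A ^ p by
          rw [show p = (p-1)+1 by ring, ENNReal.rpow_add_of_nonneg _ _ (by linarith) zero_le_one]
          ring_nf
          rw [ENNReal.rpow_one], hKdef]
        ring


end
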